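/- (Resonance classification for regular frequencies.) Let ξ̄, η̄, σ̄ ∈ ℝ×ℝ² and set ρ̄ = ξ̄ − η̄ − σ̄. Assume each of the three vectors η̄, σ̄, ρ̄ is regular, meaning v₀ ≠ 0 and 3v₀² ≠ |v|². If φ₃(ξ̄,η̄,σ̄) = 0, ∇_η̄ φ₃(ξ̄,η̄,σ̄) = 0 and ∇_σ̄ φ₃(ξ̄,η̄,σ̄) = 0, then at least one of the following holds: (η̄ + σ̄ = 0 and ρ̄ = ξ̄); or (σ̄ + ρ̄ = 0 and η̄ = ξ̄); or (η̄ + ρ̄ = 0 and σ̄ = ξ̄). -/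

import Mathlib

noncomputable section

/-- The frequency space `ℝ × ℝ²`, represented as Euclidean `ℝ³`:
coordinate `0` is `v₀` and coordinates `1, 2` form the spatial part `v`. -/
abbrev E3 : Type := EuclideanSpace ℝ (Fin 3)

/-- The dispersion relation `ω(v̄) = v₀(v₀² + |v|²)`. -/
def omega (v : E3) : ℝ := v 0 * ((v 0) ^ 2 + (v 1) ^ 2 + (v 2) ^ 2)

/-- The cubic phase `φ₃(ξ̄,η̄,σ̄) = ω(ξ̄) − ω(η̄) − ω(σ̄) − ω(ρ̄)` with `ρ̄ = ξ̄ − η̄ − σ̄`. -/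
def phi3 (ξ η σ : E3) : ℝ := omega ξ - omega η - omega σ - omega (ξ - η - σ)

/-- A frequency `v̄ = (v₀, v)` is regular when `v₀ ≠ 0` and `3v₀² ≠ |v|²`. -/
def IsRegular3 (v : E3) : Prop := v 0 ≠ 0 ∧ 3 * (v 0) ^ 2 ≠ (v 1) ^ 2 + (v 2) ^ 2

/- ### Auxiliary algebra -/

lemma cube_helper (a c u1 u2 p1 p2 : ℝ)
    (hu : u1^2+u2^2 = 3*c^2) (hp : p1^2+p2^2 = 3*a^2) (hup : u1*p1+u2*p2 = 3*a*c)
    (hphi : (2*a+c)*((2*a+c)^2+(2*u1+p1)^2+(2*u2+p2)^2)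
      = 2*(a*(a^2+u1^2+u2^2)) + c*(c^2+p1^2+p2^2)) :
    a + c = 0 := by
  have h3 : (a+c)^3 = 0 := by
    linear_combination (1/12)*hphi - ((6*a+4*c)/12)*hu - (a/6)*hp - ((8*a+4*c)/12)*hup
  exact pow_eq_zero_iff (by norm_num) |>.mp h3

lemma main_alg (a u1 u2 b v1 v2 c p1 p2 : ℝ)
    (ha : a ≠ 0) (hb : b ≠ 0) (hc : c ≠ 0)
    (hreg : 3*c^2 ≠ p1^2 + p2^2)
    (e1 : 3*a^2+u1^2+u2^2 = 3*c^2+p1^2+p2^2)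
    (e2 : a*u1 = c*p1) (e3 : a*u2 = c*p2)
    (e4 : 3*b^2+v1^2+v2^2 = 3*c^2+p1^2+p2^2)
    (e5 : b*v1 = c*p1) (e6 : b*v2 = c*p2)
    (hphi : (a+b+c)*((a+b+c)^2+(u1+v1+p1)^2+(u2+v2+p2)^2)
      = a*(a^2+u1^2+u2^2) + b*(b^2+v1^2+v2^2) + c*(c^2+p1^2+p2^2)) :
    (a+b=0 ∧ u1+v1=0 ∧ u2+v2=0) ∨ (b+c=0 ∧ v1+p1=0 ∧ v2+p2=0)
      ∨ (a+c=0 ∧ u1+p1=0 ∧ u2+p2=0) := by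
  have hc2 : (c:ℝ)^2 ≠ 0 := pow_ne_zero 2 hc
  have Q1 : (a^2 - c^2) * (3*a^2 - (p1^2+p2^2)) = 0 := by
    have h : c^2 * ((a^2 - c^2) * (3*a^2 - (p1^2+p2^2))) = c^2 * 0 := by
      linear_combination (a^2*c^2)*e1 - c^2*(a*u1+c*p1)*e2 - c^2*(a*u2+c*p2)*e3
    exact mul_left_cancel₀ hc2 h
  have Q2 : (b^2 - c^2) * (3*b^2 - (p1^2+p2^2)) = 0 := by
    have h : c^2 * ((b^2 - c^2) * (3*b^2 - (p1^2+p2^2))) = c^2 * 0 := by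
      linear_combination (b^2*c^2)*e4 - c^2*(b*v1+c*p1)*e5 - c^2*(b*v2+c*p2)*e6
    exact mul_left_cancel₀ hc2 h
  rcases mul_eq_zero.mp Q1 with hA | hA
  · rcases mul_eq_zero.mp (show (a-c)*(a+c) = 0 by linear_combination hA) with hac | hac
    · -- a = c
      have ha' : a = c := by linarith
      have hu1 : u1 = p1 := mul_left_cancel₀ hc (by linear_combination e2 - u1*hac)
      have hu2 : u2 = p2 := mul_left_cancel₀ hc (by linear_combination e3 - u2*hac)
      rw [ha', hu1, hu2] at hphi
      rcases mul_eq_zero.mp Q2 with hB | hB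
      · rcases mul_eq_zero.mp (show (b-c)*(b+c) = 0 by linear_combination hB) with hbc | hbc
        · -- b = c : all equal, contradiction with phi
          exfalso
          have hb' : b = c := by linarith
          have hv1 : v1 = p1 := mul_left_cancel₀ hc (by linear_combination e5 - v1*hbc)
          have hv2 : v2 = p2 := mul_left_cancel₀ hc (by linear_combination e6 - v2*hbc)
          rw [hb', hv1, hv2] at hphi
          have hz : c*(c^2+p1^2+p2^2) = 0 := by linear_combination (1/24)*hphi
          have hx := (mul_eq_zero.mp hz).resolve_left hc
          have hcpos : 0 < c^2 := lt_of_le_of_ne (sq_nonneg c) (Ne.symm hc2)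
          nlinarith [sq_nonneg p1, sq_nonneg p2]
        · -- b = -c : second disjunct
          refine Or.inr (Or.inl ⟨by linarith, ?_, ?_⟩)
          · have h : c*(v1+p1) = 0 := by linear_combination -e5 + v1*hbc
            exact (mul_eq_zero.mp h).resolve_left hc
          · have h : c*(v2+p2) = 0 := by linear_combination -e6 + v2*hbc
            exact (mul_eq_zero.mp h).resolve_left hc
      · -- 3b^2 = p1^2+p2^2 : cube case, contradiction
        exfalso
        have hb2 : (b:ℝ)^2 ≠ 0 := pow_ne_zero 2 hb
        have hv : v1^2+v2^2 = 3*c^2 := by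
          have h : b^2*(v1^2+v2^2) = b^2*(3*c^2) := by
            linear_combination (b*v1+c*p1)*e5 + (b*v2+c*p2)*e6 - c^2*hB
          exact mul_left_cancel₀ hb2 h
        have hup : p1*v1+p2*v2 = 3*c*b := by
          have h : b*(p1*v1+p2*v2) = b*(3*c*b) := by
            linear_combination p1*e5 + p2*e6 - c*hB
          exact mul_left_cancel₀ hb h
        have hcb : c + b = 0 :=
          cube_helper c b p1 p2 v1 v2 (by linarith) hv hup (by linear_combination hphi)
        exact hreg (by linear_combination hB + 3*(c-b)*hcb)
    · -- a = -c : third disjunct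
      refine Or.inr (Or.inr ⟨hac, ?_, ?_⟩)
      · have h : c*(u1+p1) = 0 := by linear_combination -e2 + u1*hac
        exact (mul_eq_zero.mp h).resolve_left hc
      · have h : c*(u2+p2) = 0 := by linear_combination -e3 + u2*hac
        exact (mul_eq_zero.mp h).resolve_left hc
  · -- 3a^2 = p1^2+p2^2
    rcases mul_eq_zero.mp Q2 with hB | hB
    · rcases mul_eq_zero.mp (show (b-c)*(b+c) = 0 by linear_combination hB) with hbc | hbc
      · -- b = c : cube case, contradiction
        exfalso
        have hb' : b = c := by linarith
        have hv1 : v1 = p1 := mul_left_cancel₀ hc (by linear_combination e5 - v1*hbc)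
        have hv2 : v2 = p2 := mul_left_cancel₀ hc (by linear_combination e6 - v2*hbc)
        rw [hb', hv1, hv2] at hphi
        have ha2 : (a:ℝ)^2 ≠ 0 := pow_ne_zero 2 ha
        have hu : u1^2+u2^2 = 3*c^2 := by
          have h : a^2*(u1^2+u2^2) = a^2*(3*c^2) := by
            linear_combination (a*u1+c*p1)*e2 + (a*u2+c*p2)*e3 - c^2*hA
          exact mul_left_cancel₀ ha2 h
        have hup : p1*u1+p2*u2 = 3*c*a := by
          have h : a*(p1*u1+p2*u2) = a*(3*c*a) := by
            linear_combination p1*e2 + p2*e3 - c*hA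
          exact mul_left_cancel₀ ha h
        have hca : c + a = 0 :=
          cube_helper c a p1 p2 u1 u2 (by linarith) hu hup (by linear_combination hphi)
        exact hreg (by linear_combination hA + 3*(c-a)*hca)
      · -- b = -c : second disjunct
        refine Or.inr (Or.inl ⟨by linarith, ?_, ?_⟩)
        · have h : c*(v1+p1) = 0 := by linear_combination -e5 + v1*hbc
          exact (mul_eq_zero.mp h).resolve_left hc
        · have h : c*(v2+p2) = 0 := by linear_combination -e6 + v2*hbc
          exact (mul_eq_zero.mp h).resolve_left hc
    · -- 3a^2 = 3b^2 = p1^2+p2^2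
      rcases mul_eq_zero.mp (show (a-b)*(a+b) = 0 by
          linear_combination (1/3)*hA - (1/3)*hB) with hab | hab
      · -- a = b : cube case, contradiction
        exfalso
        have hb' : b = a := by linarith
        rw [hb'] at hphi e5 e6
        have hv1 : v1 = u1 := mul_left_cancel₀ ha (e5.trans e2.symm)
        have hv2 : v2 = u2 := mul_left_cancel₀ ha (e6.trans e3.symm)
        rw [hv1, hv2] at hphi
        have ha2 : (a:ℝ)^2 ≠ 0 := pow_ne_zero 2 ha
        have hu : u1^2+u2^2 = 3*c^2 := by
          have h : a^2*(u1^2+u2^2) = a^2*(3*c^2) := by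
            linear_combination (a*u1+c*p1)*e2 + (a*u2+c*p2)*e3 - c^2*hA
          exact mul_left_cancel₀ ha2 h
        have hup : u1*p1+u2*p2 = 3*a*c := by
          have h : a*(u1*p1+u2*p2) = a*(3*a*c) := by
            linear_combination p1*e2 + p2*e3 - c*hA
          exact mul_left_cancel₀ ha h
        have hca : a + c = 0 :=
          cube_helper a c u1 u2 p1 p2 hu (by linarith) hup (by linear_combination hphi)
        exact hreg (by linear_combination hA + 3*(c-a)*hca)
      · -- a = -b : first disjunct
        refine Or.inl ⟨hab, ?_, ?_⟩
        · have h : a*(u1+v1) = 0 := by linear_combination e2 - e5 + v1*hab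
          exact (mul_eq_zero.mp h).resolve_left ha
        · have h : a*(u2+v2) = 0 := by linear_combination e3 - e6 + v2*hab
          exact (mul_eq_zero.mp h).resolve_left ha

/- ### Auxiliary calculus -/

/-- The Fréchet derivative of `omega`. -/
def omegaD (v : E3) : E3 →L[ℝ] ℝ :=
  (3*(v 0)^2+(v 1)^2+(v 2)^2) • EuclideanSpace.proj (0:Fin 3)
  + (2*v 0*v 1) • EuclideanSpace.proj (1:Fin 3) + (2*v 0*v 2) • EuclideanSpace.proj (2:Fin 3)

lemma proj_hasFDerivAt (i : Fin 3) (v : E3) :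
    HasFDerivAt (fun v : E3 => v i) (EuclideanSpace.proj i : E3 →L[ℝ] ℝ) v := by
  have := (EuclideanSpace.proj (i:Fin 3) (𝕜 := ℝ)).hasFDerivAt (x := v)
  convert this using 2
  rfl

lemma hasFDerivAt_omega (v : E3) : HasFDerivAt omega (omegaD v) v := by
  have h0 := proj_hasFDerivAt 0 v
  have h1 := proj_hasFDerivAt 1 v
  have h2 := proj_hasFDerivAt 2 v
  have h := h0.mul (((h0.mul h0).add (h1.mul h1)).add (h2.mul h2))
  have hf : omega = ((fun v : E3 => v 0) * ((((fun v : E3 => v 0) * fun v : E3 => v 0) + (fun v : E3 => v 1) * fun v : E3 => v 1) + (fun v : E3 => v 2) * fun v : E3 => v 2)) := by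
    funext w; simp only [omega, Pi.mul_apply, Pi.add_apply]; ring
  rw [hf]
  refine h.congr_fderiv ?_
  ext w
  simp [omegaD, ContinuousLinearMap.smul_apply, ContinuousLinearMap.add_apply]
  ring

lemma eta_deriv (ξ η σ : E3) :
    HasFDerivAt (fun η' => phi3 ξ η' σ) (omegaD (ξ - η - σ) - omegaD η) η := by
  have hm : HasFDerivAt (fun η' : E3 => ξ - η' - σ)
      (-(ContinuousLinearMap.id ℝ E3)) η := by
    have h1 := (hasFDerivAt_id (𝕜 := ℝ) η).const_sub (ξ - σ)
    have he : (fun η' : E3 => ξ - η' - σ) = fun x : E3 => (ξ - σ) - x := by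
      funext x; abel
    rw [he]; exact h1
  have hcomp := (hasFDerivAt_omega (ξ - η - σ)).comp η hm
  have h := (((hasFDerivAt_const (omega ξ) η).sub (hasFDerivAt_omega η)).sub
      (hasFDerivAt_const (omega σ) η)).sub hcomp
  have hfun : (fun η' => phi3 ξ η' σ) = (((fun x => omega ξ) - omega - fun x => omega σ) - omega ∘ fun η' => ξ - η' - σ) := by
    funext x; rfl
  rw [hfun]
  refine h.congr_fderiv ?_
  ext w
  simp [ContinuousLinearMap.sub_apply, ContinuousLinearMap.comp_apply,
    ContinuousLinearMap.neg_apply, ContinuousLinearMap.id_apply, map_neg]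
  ring

lemma sigma_deriv (ξ η σ : E3) :
    HasFDerivAt (fun σ' => phi3 ξ η σ') (omegaD (ξ - η - σ) - omegaD σ) σ := by
  have hm : HasFDerivAt (fun σ' : E3 => ξ - η - σ')
      (-(ContinuousLinearMap.id ℝ E3)) σ := (hasFDerivAt_id (𝕜 := ℝ) σ).const_sub (ξ - η)
  have hcomp := (hasFDerivAt_omega (ξ - η - σ)).comp σ hm
  have h := (((hasFDerivAt_const (omega ξ) σ).sub (hasFDerivAt_const (omega η) σ)).sub
      (hasFDerivAt_omega σ)).sub hcomp
  have hfun : (fun σ' => phi3 ξ η σ') = (((fun x => omega ξ) - (fun x => omega η) - omega) - omega ∘ fun σ' => ξ - η - σ') := by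
    funext x; rfl
  rw [hfun]
  refine h.congr_fderiv ?_
  ext w
  simp [ContinuousLinearMap.sub_apply, ContinuousLinearMap.comp_apply,
    ContinuousLinearMap.neg_apply, ContinuousLinearMap.id_apply, map_neg]
  ring

lemma grad_zero_fderiv {f : E3 → ℝ} {x : E3} (h : gradient f x = 0) :
    fderiv ℝ f x = 0 := by
  unfold gradient at h
  rwa [LinearIsometryEquiv.map_eq_zero_iff] at h

lemma omegaD_eq (x y : E3) (h : omegaD x - omegaD y = 0) :
    (3*(y 0)^2+(y 1)^2+(y 2)^2 = 3*(x 0)^2+(x 1)^2+(x 2)^2)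
      ∧ (y 0 * y 1 = x 0 * x 1) ∧ (y 0 * y 2 = x 0 * x 2) := by
  have h0 := DFunLike.congr_fun h (EuclideanSpace.single (0:Fin 3) (1:ℝ))
  have h1 := DFunLike.congr_fun h (EuclideanSpace.single (1:Fin 3) (1:ℝ))
  have h2 := DFunLike.congr_fun h (EuclideanSpace.single (2:Fin 3) (1:ℝ))
  simp [omegaD, EuclideanSpace.single_apply] at h0 h1 h2
  refine ⟨by linarith, by linarith, by linarith⟩

/-- resonance classification for regular frequencies: if `η̄, σ̄, ρ̄`
are regular and `φ₃ = 0`, `∇_η̄ φ₃ = 0`, `∇_σ̄ φ₃ = 0` at `(ξ̄,η̄,σ̄)`, then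
`(η̄+σ̄ = 0 ∧ ρ̄ = ξ̄)` or `(σ̄+ρ̄ = 0 ∧ η̄ = ξ̄)` or `(η̄+ρ̄ = 0 ∧ σ̄ = ξ̄)`. -/
theorem stmt_4 (ξ η σ ρ : E3) (hρdef : ρ = ξ - η - σ)
    (hη : IsRegular3 η) (hσ : IsRegular3 σ) (hρ : IsRegular3 ρ)
    (hphi : phi3 ξ η σ = 0)
    (hgradη : gradient (fun η' => phi3 ξ η' σ) η = 0)
    (hgradσ : gradient (fun σ' => phi3 ξ η σ') σ = 0) :
    (η + σ = 0 ∧ ρ = ξ) ∨ (σ + ρ = 0 ∧ η = ξ) ∨ (η + ρ = 0 ∧ σ = ξ) := by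
  have hLη : omegaD ρ - omegaD η = 0 := by
    rw [hρdef, ← (eta_deriv ξ η σ).fderiv]
    exact grad_zero_fderiv hgradη
  have hLσ : omegaD ρ - omegaD σ = 0 := by
    rw [hρdef, ← (sigma_deriv ξ η σ).fderiv]
    exact grad_zero_fderiv hgradσ
  obtain ⟨A1, A2, A3⟩ := omegaD_eq ρ η hLη
  obtain ⟨B1, B2, B3⟩ := omegaD_eq ρ σ hLσ
  have hx0 : ξ 0 = η 0 + σ 0 + ρ 0 := by rw [hρdef]; simp
  have hx1 : ξ 1 = η 1 + σ 1 + ρ 1 := by rw [hρdef]; simp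
  have hx2 : ξ 2 = η 2 + σ 2 + ρ 2 := by rw [hρdef]; simp
  have hphi' : (η 0+σ 0+ρ 0)*((η 0+σ 0+ρ 0)^2+(η 1+σ 1+ρ 1)^2+(η 2+σ 2+ρ 2)^2)
      = η 0*((η 0)^2+(η 1)^2+(η 2)^2) + σ 0*((σ 0)^2+(σ 1)^2+(σ 2)^2)
        + ρ 0*((ρ 0)^2+(ρ 1)^2+(ρ 2)^2) := by
    unfold phi3 omega at hphi
    rw [← hρdef] at hphi
    rw [hx0, hx1, hx2] at hphi
    linear_combination hphi
  have key := main_alg (η 0) (η 1) (η 2) (σ 0) (σ 1) (σ 2) (ρ 0) (ρ 1) (ρ 2)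
    hη.1 hσ.1 hρ.1 hρ.2 A1 A2 A3 B1 B2 B3 hphi'
  have hξ : ξ = η + σ + ρ := by rw [hρdef]; abel
  rcases key with ⟨h1, h2, h3⟩ | ⟨h1, h2, h3⟩ | ⟨h1, h2, h3⟩
  · left
    have hsum : η + σ = 0 := by
      ext i
      fin_cases i <;> simp only [PiLp.add_apply, PiLp.zero_apply] <;>
        first
        | exact h1
        | exact h2
        | exact h3
    exact ⟨hsum, by rw [hρdef, sub_sub, hsum, sub_zero]⟩
  · right; left
    have hsum : σ + ρ = 0 := by
      ext i
      fin_cases i <;> simp only [PiLp.add_apply, PiLp.zero_apply] <;>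
        first
        | exact h1
        | exact h2
        | exact h3
    exact ⟨hsum, by rw [hξ, add_assoc, hsum, add_zero]⟩
  · right; right
    have hsum : η + ρ = 0 := by
      ext i
      fin_cases i <;> simp only [PiLp.add_apply, PiLp.zero_apply] <;>
        first
        | exact h1
        | exact h2
        | exact h3
    refine ⟨hsum, ?_⟩
    rw [hξ, show η + σ + ρ = σ + (η + ρ) from by abel, hsum, add_zero]
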